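/- Let E be a euclidean space, and suppose Φ ⊂ E contains a root subsystem of type B₂, i.e. there exist orthogonal vectors e₁, e₂ ∈ E of equal norm such that ±e₁, ±e₂, ±e₁±e₂ all lie in Φ. Let S be an orbit of the Weyl group of Φ that spans E. Then there exist a vector λ ∈ S and two orthogonal roots α₁, α₂ ∈ Φ such that λ is orthogonal to neither α₁ nor α₂ — equivalently, if every element of S is, for each pair of orthogonal roots, orthogonal to at least one of them, then S does not span E. -/

import Mathlib

open scoped InnerProductSpace

/-- If `Φ` contains a root subsystem of type `B₂` spanned by orthogonal vectors `e₁, e₂` of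
equal norm, and every element of a Weyl orbit `S` is orthogonal to at least one root of each
orthogonal pair of roots in `Φ`, then `S` does not span `E`. -/
theorem stmt2 {E : Type*} [NormedAddCommGroup E] [InnerProductSpace ℝ E]
    (Φ S : Set E) (e₁ e₂ : E) (he₁ : e₁ ≠ 0)
    (horth : ⟪e₁, e₂⟫_ℝ = 0) (hnorm : ‖e₁‖ = ‖e₂‖)
    (hB2 : ({e₁, -e₁, e₂, -e₂, e₁ + e₂, -(e₁ + e₂), e₁ - e₂, -(e₁ - e₂)} : Set E) ⊆ Φ)
    (hS : ∀ lam ∈ S, ∀ α₁ ∈ Φ, ∀ α₂ ∈ Φ, ⟪α₁, α₂⟫_ℝ = 0 →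
      ⟪lam, α₁⟫_ℝ = 0 ∨ ⟪lam, α₂⟫_ℝ = 0) :
    Submodule.span ℝ S ≠ ⊤ := by
  intro htop
  have key : ∀ lam ∈ S, ⟪lam, e₁⟫_ℝ = 0 := by
    intro lam hlam
    have h1 := hS lam hlam e₁ (hB2 (by simp)) e₂ (hB2 (by simp)) horth
    have horth2 : ⟪e₁ + e₂, e₁ - e₂⟫_ℝ = 0 := by
      rw [inner_sub_right, inner_add_left, inner_add_left, real_inner_comm e₂ e₁,
        real_inner_self_eq_norm_sq, real_inner_self_eq_norm_sq, hnorm]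
      ring
    have h2 := hS lam hlam (e₁ + e₂) (hB2 (by simp)) (e₁ - e₂) (hB2 (by simp)) horth2
    rcases h1 with h1 | h1
    · exact h1
    rcases h2 with h2 | h2
    · rw [inner_add_right, h1] at h2; linarith
    · rw [inner_sub_right, h1] at h2; linarith
  have hle : Submodule.span ℝ S ≤ LinearMap.ker ((innerSL ℝ e₁ : E →L[ℝ] ℝ) : E →ₗ[ℝ] ℝ) := by
    rw [Submodule.span_le]
    intro x hx
    simp only [SetLike.mem_coe, LinearMap.mem_ker, ContinuousLinearMap.coe_coe, innerSL_apply_apply]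
    rw [real_inner_comm]
    exact key x hx
  have : ⟪e₁, e₁⟫_ℝ = 0 := by
    have := hle (htop ▸ Submodule.mem_top : e₁ ∈ Submodule.span ℝ S)
    simpa using this
  exact he₁ (inner_self_eq_zero.mp this)
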